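/- Let N ≥ 8 be an even integer, Δ ∈ ℂ, and r ∈ ℂ with r ≠ 0 and such that none of r−2Δ, 1−2Δr, r−Δ, 1−Δr vanishes. Then the pair (e₃,e₄) = (r, 1/r) satisfies both bound-pair Bethe equations for n=4 if and only if r is a root of the reciprocal polynomial equation r^N − 3Δ r^{N−1} + 2Δ²(r^{N−2} + r²) − 3Δ r + 1 = 0. -/

import Mathlib

/-- The bound-pair Bethe equation for the unknown `x`, paired with `y`, in the `n = 4`
block of the zero-field six-vertex model with `N` columns:
`x ^ (N-1) = -((1-2Δx)/(x-2Δ)) · ((1-2Δx+xy)/(1-2Δy+xy))`. -/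
def betheEq4 (N : ℕ) (Δ x y : ℂ) : Prop :=
  x ^ (N - 1) =
    -((1 - 2*Δ*x) / (x - 2*Δ)) * ((1 - 2*Δ*x + x*y) / (1 - 2*Δ*y + x*y))

/-- For even `N ≥ 8`, the pair `(e₃, e₄) = (r, 1/r)` satisfies both bound-pair Bethe
equations for `n = 4` if and only if `r` is a root of the reciprocal polynomial
`r^N − 3Δ r^(N−1) + 2Δ²(r^(N−2) + r²) − 3Δ r + 1`. -/
theorem n4_boundPair_iff_reciprocal (N : ℕ) (hN : 8 ≤ N) (hNeven : Even N)
    (Δ r : ℂ) (hr : r ≠ 0)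
    (h1 : r - 2*Δ ≠ 0) (h2 : 1 - 2*Δ*r ≠ 0) (h3 : r - Δ ≠ 0) (h4 : 1 - Δ*r ≠ 0) :
    (betheEq4 N Δ r (1/r) ∧ betheEq4 N Δ (1/r) r) ↔
      r^N - 3*Δ*r^(N-1) + 2*Δ^2*(r^(N-2) + r^2) - 3*Δ*r + 1 = 0 := by
  obtain ⟨m, rfl⟩ : ∃ m, N = m + 2 := ⟨N - 2, by omega⟩
  have e1 : m + 2 - 1 = m + 1 := rfl
  have e2 : m + 2 - 2 = m := rfl
  have hrp : r ^ (m+1) ≠ 0 := pow_ne_zero _ hr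
  have hden2 : (1 - 2*Δ*r) * (1 - Δ*r) * r ≠ 0 := mul_ne_zero (mul_ne_zero h2 h4) hr
  have s1 : (1:ℂ) - 2*Δ*(1/r) + r*(1/r) = 2*(r - Δ)/r := by field_simp; ring
  have s2 : (1:ℂ) - 2*Δ*r + r*(1/r) = 2*(1 - Δ*r) := by field_simp; ring
  have s3 : (1:ℂ) - 2*Δ*(1/r) + (1/r)*r = 2*(r - Δ)/r := by field_simp; ring
  have s4 : (1:ℂ) - 2*Δ*r + (1/r)*r = 2*(1 - Δ*r) := by field_simp; ring
  have s5 : (1:ℂ) - 2*Δ*(1/r) = (r - 2*Δ)/r := by field_simp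
  have s6 : (1:ℂ)/r - 2*Δ = (1 - 2*Δ*r)/r := by field_simp
  have rhs1 : -((1 - 2*Δ*r)/(r - 2*Δ)) * ((1 - 2*Δ*r + r*(1/r))/(1 - 2*Δ*(1/r) + r*(1/r)))
      = (-((1 - 2*Δ*r)*(1 - Δ*r)*r)) / ((r - 2*Δ)*(r - Δ)) := by
    rw [s1, s2]
    field_simp
  have rhs2 : -((1 - 2*Δ*(1/r))/(1/r - 2*Δ)) * ((1 - 2*Δ*(1/r) + (1/r)*r)/(1 - 2*Δ*r + (1/r)*r))
      = (-((r - 2*Δ)*(r - Δ))) / ((1 - 2*Δ*r)*(1 - Δ*r)*r) := by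
    rw [s3, s4, s5, s6]
    field_simp
  have E1 : betheEq4 (m+2) Δ r (1/r) ↔
      r^(m+1) * ((r - 2*Δ)*(r - Δ)) + (1 - 2*Δ*r)*(1 - Δ*r)*r = 0 := by
    rw [betheEq4, e1, rhs1, eq_div_iff (mul_ne_zero h1 h3)]
    constructor <;> intro h <;> linear_combination h
  have E2 : betheEq4 (m+2) Δ (1/r) r ↔
      r^(m+1) * ((r - 2*Δ)*(r - Δ)) + (1 - 2*Δ*r)*(1 - Δ*r)*r = 0 := by
    rw [betheEq4, e1, rhs2]
    rw [show (1/r:ℂ)^(m+1) = 1/r^(m+1) by rw [one_div, inv_pow, one_div]]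
    rw [div_eq_div_iff hrp hden2]
    constructor <;> intro h <;> linear_combination h
  rw [E1, E2, and_self, e1, e2]
  constructor
  · intro h
    have h0 : r * (r^(m+2) - 3*Δ*r^(m+1) + 2*Δ^2*(r^m + r^2) - 3*Δ*r + 1) = 0 := by
      linear_combination h
    rcases mul_eq_zero.mp h0 with h' | h'
    · exact absurd h' hr
    · exact h'
  · intro hp
    linear_combination r * hp
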